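/- arXiv:1103.1374 — 2 statements merged into one kernel-verified Lean document; each statement's English description precedes it below -/
import Mathlib

section
/- Let (Ω, 𝓕, P) be a probability space, T > 0, and let L, N, A, X be real-valued stochastic processes indexed by [0,T] such that X_t = x₀ + L_t + N_t − A_t for a constant x₀, where L_t ∈ L¹(P) and N_t ∈ L¹(P) for every t ∈ [0,T], A_0 = 0 almost surely, and the paths of A are almost surely nonnegative and nondecreasing (A_s ≤ A_t a.s. whenever s ≤ t). For n ≥ 1 let t_i = iT/n be the regular partition of [0,T] and write δ_i X = X_{t_i} − X_{t_{i−1}}. Then sqrt( Σ_{i=1}^n (δ_i X)² ) is integrable if and only if A_T ∈ L¹(P). In particular, this integrability holds for some n ≥ 1 if and only if it holds for every n ≥ 1. -/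
open MeasureTheory Finset

lemma sqrt_sum_sq_le_sum_abs {n : ℕ} (f : ℕ → ℝ) :
    Real.sqrt (∑ i ∈ Finset.range n, f i ^ 2) ≤ ∑ i ∈ Finset.range n, abs (f i) := by
  have h1 : (∑ i ∈ Finset.range n, f i ^ 2) ≤ (∑ i ∈ Finset.range n, abs (f i)) ^ 2 := by
    calc ∑ i ∈ Finset.range n, f i ^ 2 = ∑ i ∈ Finset.range n, (abs (f i)) ^ 2 := by
          simp [sq_abs]
      _ ≤ (∑ i ∈ Finset.range n, abs (f i)) ^ 2 :=
          Finset.sum_sq_le_sq_sum_of_nonneg (fun i _ => abs_nonneg _)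
  calc Real.sqrt (∑ i ∈ Finset.range n, f i ^ 2) ≤
      Real.sqrt ((∑ i ∈ Finset.range n, abs (f i)) ^ 2) := Real.sqrt_le_sqrt h1
    _ = abs (∑ i ∈ Finset.range n, abs (f i)) := Real.sqrt_sq_eq_abs _
    _ = ∑ i ∈ Finset.range n, abs (f i) :=
        abs_of_nonneg (Finset.sum_nonneg fun i _ => abs_nonneg _)

lemma abs_le_sqrt_sum_sq {n : ℕ} (f : ℕ → ℝ) {j : ℕ} (hj : j ∈ Finset.range n) :
    abs (f j) ≤ Real.sqrt (∑ i ∈ Finset.range n, f i ^ 2) := by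
  have : f j ^ 2 ≤ ∑ i ∈ Finset.range n, f i ^ 2 :=
    Finset.single_le_sum (fun i _ => sq_nonneg (f i)) hj
  calc abs (f j) = Real.sqrt (f j ^ 2) := (Real.sqrt_sq_eq_abs _).symm
    _ ≤ _ := Real.sqrt_le_sqrt this

/-- Abstract form of Theorem 2 of the paper: if `X = x₀ + L + N - A` on `[0,T]` with
`L_t, N_t ∈ L¹`, `A_0 = 0` a.s. and `A` a.s. nonnegative nondecreasing, then for the regular
partition `t_i = iT/n`, the discrete volatility swap payoff `sqrt(∑ i (δ_i X)²)` is integrable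
iff `A_T ∈ L¹(P)`; in particular integrability for some `n ≥ 1` is equivalent to integrability
for every `n ≥ 1`. -/
theorem stmt_3 {Ω : Type*} [MeasurableSpace Ω] (P : Measure Ω) [IsProbabilityMeasure P]
    (T : ℝ) (hT : 0 < T) (x₀ : ℝ) (L N A X : ℝ → Ω → ℝ)
    (hdecomp : ∀ t ∈ Set.Icc (0 : ℝ) T, ∀ ω, X t ω = x₀ + L t ω + N t ω - A t ω)
    (hL : ∀ t ∈ Set.Icc (0 : ℝ) T, Integrable (L t) P)
    (hN : ∀ t ∈ Set.Icc (0 : ℝ) T, Integrable (N t) P)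
    (hAmeas : ∀ t ∈ Set.Icc (0 : ℝ) T, AEStronglyMeasurable (A t) P)
    (hA0 : ∀ᵐ ω ∂P, A 0 ω = 0)
    (hAnonneg : ∀ t ∈ Set.Icc (0 : ℝ) T, ∀ᵐ ω ∂P, 0 ≤ A t ω)
    (hAmono : ∀ s t : ℝ, 0 ≤ s → s ≤ t → t ≤ T → ∀ᵐ ω ∂P, A s ω ≤ A t ω) :
    (∀ n : ℕ, 1 ≤ n →
      (Integrable (fun ω => Real.sqrt (∑ i ∈ Finset.range n,
          (X (((i : ℝ) + 1) * T / n) ω - X ((i : ℝ) * T / n) ω) ^ 2)) P ↔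
        Integrable (A T) P)) ∧
    ((∃ n : ℕ, 1 ≤ n ∧ Integrable (fun ω => Real.sqrt (∑ i ∈ Finset.range n,
          (X (((i : ℝ) + 1) * T / n) ω - X ((i : ℝ) * T / n) ω) ^ 2)) P) ↔
      (∀ n : ℕ, 1 ≤ n → Integrable (fun ω => Real.sqrt (∑ i ∈ Finset.range n,
          (X (((i : ℝ) + 1) * T / n) ω - X ((i : ℝ) * T / n) ω) ^ 2)) P)) := by
  have hTmem : T ∈ Set.Icc (0 : ℝ) T := ⟨hT.le, le_rfl⟩
  have h0mem : (0 : ℝ) ∈ Set.Icc (0 : ℝ) T := ⟨le_rfl, hT.le⟩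
  have key : ∀ n : ℕ, 1 ≤ n →
      (Integrable (fun ω => Real.sqrt (∑ i ∈ Finset.range n,
          (X (((i : ℝ) + 1) * T / n) ω - X ((i : ℝ) * T / n) ω) ^ 2)) P ↔
        Integrable (A T) P) := by
    intro n hn
    have hn0 : (0 : ℝ) < (n : ℝ) := by exact_mod_cast hn
    -- grid points
    have hti : ∀ i : ℕ, i ≤ n → ((i : ℝ) * T / n) ∈ Set.Icc (0 : ℝ) T := by
      intro i hi
      constructor
      · positivity
      · rw [div_le_iff₀ hn0]
        have : (i : ℝ) ≤ (n : ℝ) := by exact_mod_cast hi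
        nlinarith
    have htn : ((n : ℝ) * T / n) = T := by field_simp
    have ht0 : ((0 : ℝ) * T / n) = 0 := by ring
    -- measurability of X at grid points
    have hXmeas : ∀ t ∈ Set.Icc (0 : ℝ) T, AEStronglyMeasurable (X t) P := by
      intro t ht
      have : X t = fun ω => x₀ + L t ω + N t ω - A t ω := funext (hdecomp t ht)
      rw [this]
      exact (((aestronglyMeasurable_const.add (hL t ht).1).add
        (hN t ht).1)).sub (hAmeas t ht)
    -- the increments
    set u : ℕ → Ω → ℝ := fun i => X ((i : ℝ) * T / n) with hu
    have hmem : ∀ i : ℕ, i ∈ Finset.range n →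
        (((i : ℝ) + 1) * T / n) ∈ Set.Icc (0 : ℝ) T ∧
        (((i : ℝ)) * T / n) ∈ Set.Icc (0 : ℝ) T := by
      intro i hi
      rw [Finset.mem_range] at hi
      constructor
      · have := hti (i + 1) hi
        push_cast at this
        exact this
      · exact hti i hi.le
    have hfmeas : ∀ i ∈ Finset.range n, AEStronglyMeasurable
        (fun ω => X (((i : ℝ) + 1) * T / n) ω - X ((i : ℝ) * T / n) ω) P := by
      intro i hi
      exact (hXmeas _ (hmem i hi).1).sub (hXmeas _ (hmem i hi).2)
    have hgmeas : AEStronglyMeasurable (fun ω => Real.sqrt (∑ i ∈ Finset.range n,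
        (X (((i : ℝ) + 1) * T / n) ω - X ((i : ℝ) * T / n) ω) ^ 2)) P := by
      apply Continuous.comp_aestronglyMeasurable Real.continuous_sqrt
      exact Finset.aestronglyMeasurable_fun_sum _ (fun i hi => (hfmeas i hi).pow 2)
    constructor
    · -- sqrt integrable → A T integrable
      intro hg
      -- each increment integrable
      have hfint : ∀ i ∈ Finset.range n, Integrable
          (fun ω => X (((i : ℝ) + 1) * T / n) ω - X ((i : ℝ) * T / n) ω) P := by
        intro i hi
        refine hg.mono (hfmeas i hi) (Filter.Eventually.of_forall fun ω => ?_)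
        rw [Real.norm_eq_abs, Real.norm_eq_abs]
        calc |X (((i : ℝ) + 1) * T / n) ω - X ((i : ℝ) * T / n) ω|
            ≤ Real.sqrt (∑ j ∈ Finset.range n,
              (X (((j : ℝ) + 1) * T / n) ω - X ((j : ℝ) * T / n) ω) ^ 2) :=
              abs_le_sqrt_sum_sq (fun j => X (((j : ℝ) + 1) * T / n) ω - X ((j : ℝ) * T / n) ω) hi
          _ ≤ |Real.sqrt _| := le_abs_self _
      -- telescoping sum
      have hsum : Integrable (fun ω => ∑ i ∈ Finset.range n,
          (X (((i : ℝ) + 1) * T / n) ω - X ((i : ℝ) * T / n) ω)) P :=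
        integrable_finset_sum _ hfint
      have htel : ∀ ω, (∑ i ∈ Finset.range n,
          (X (((i : ℝ) + 1) * T / n) ω - X ((i : ℝ) * T / n) ω)) = X T ω - X 0 ω := by
        intro ω
        have : ∀ i ∈ Finset.range n,
            X (((i : ℝ) + 1) * T / n) ω - X ((i : ℝ) * T / n) ω
              = u (i + 1) ω - u i ω := by
          intro i _
          simp only [hu]
          push_cast
          ring_nf
        rw [Finset.sum_congr rfl this, Finset.sum_range_sub (fun i => u i ω)]
        simp only [hu, htn, Nat.cast_zero, ht0]
      have hXT0 : Integrable (fun ω => X T ω - X 0 ω) P := by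
        refine hsum.congr (Filter.Eventually.of_forall fun ω => htel ω)
      -- X 0 integrable
      have hX0 : Integrable (X 0) P := by
        have : Integrable (fun ω => x₀ + L 0 ω + N 0 ω) P :=
          (integrable_const x₀).add (hL 0 h0mem) |>.add (hN 0 h0mem)
        refine this.congr ?_
        filter_upwards [hA0] with ω h0
        rw [hdecomp 0 h0mem ω, h0, sub_zero]
      have hXT : Integrable (X T) P := by
        have := hXT0.add hX0
        refine this.congr (Filter.Eventually.of_forall fun ω => ?_)
        simp
      have : Integrable (fun ω => x₀ + L T ω + N T ω - X T ω) P :=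
        ((integrable_const x₀).add (hL T hTmem) |>.add (hN T hTmem)).sub hXT
      refine this.congr (Filter.Eventually.of_forall fun ω => ?_)
      show x₀ + L T ω + N T ω - X T ω = A T ω
      rw [hdecomp T hTmem ω]; ring
    · -- A T integrable → sqrt integrable
      intro hAT
      -- A at grid points integrable
      have hAint : ∀ t ∈ Set.Icc (0 : ℝ) T, Integrable (A t) P := by
        intro t ht
        refine hAT.mono (hAmeas t ht) ?_
        filter_upwards [hAnonneg t ht, hAmono t T ht.1 ht.2 le_rfl,
          hAnonneg T hTmem] with ω h1 h2 h3
        rw [Real.norm_eq_abs, Real.norm_eq_abs, abs_of_nonneg h1, abs_of_nonneg h3]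
        exact h2
      have hXint : ∀ t ∈ Set.Icc (0 : ℝ) T, Integrable (X t) P := by
        intro t ht
        have : Integrable (fun ω => x₀ + L t ω + N t ω - A t ω) P :=
          ((integrable_const x₀).add (hL t ht) |>.add (hN t ht)).sub (hAint t ht)
        exact this.congr (Filter.Eventually.of_forall fun ω => (hdecomp t ht ω).symm)
      have hfint : ∀ i ∈ Finset.range n, Integrable
          (fun ω => X (((i : ℝ) + 1) * T / n) ω - X ((i : ℝ) * T / n) ω) P := by
        intro i hi
        exact (hXint _ (hmem i hi).1).sub (hXint _ (hmem i hi).2)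
      have hbound : Integrable (fun ω => ∑ i ∈ Finset.range n,
          |X (((i : ℝ) + 1) * T / n) ω - X ((i : ℝ) * T / n) ω|) P :=
        integrable_finset_sum _ (fun i hi => (hfint i hi).abs)
      refine hbound.mono' hgmeas (Filter.Eventually.of_forall fun ω => ?_)
      rw [Real.norm_eq_abs, abs_of_nonneg (Real.sqrt_nonneg _)]
      exact sqrt_sum_sq_le_sum_abs (fun j => X (((j : ℝ) + 1) * T / n) ω - X ((j : ℝ) * T / n) ω)
  refine ⟨key, ?_⟩
  constructor
  · rintro ⟨n, hn, h⟩ m hm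
    exact (key m hm).2 ((key n hn).1 h)
  · intro h
    exact ⟨1, le_rfl, h 1 le_rfl⟩
end

section
/- Let (Ω, 𝓕, (𝓕_t)_{t∈[0,T]}, P) be a filtered probability space. Let M and N be martingales with M_t, N_t ∈ L²(P) for all t ∈ [0,T] and with orthogonal increments in the sense that E[(M_t − M_s)(N_t − N_s)] = 0 for all 0 ≤ s ≤ t ≤ T. Let A be an adapted process with A_0 = 0 a.s., almost surely nondecreasing nonnegative paths, and A_T ∈ L²(P). Set X_t = x₀ + M_t + N_t − A_t for a constant x₀. Then for every n ≥ 1, with the regular partition t_i = iT/n and δ_i X = X_{t_i} − X_{t_{i−1}}: | E(Σ_{i=1}^n (δ_i X)²) − ( E((M_T − M_0)²) + E((N_T − N_0)²) ) | ≤ C, where C = E(A_T²) + 2·sqrt(E((M_T − M_0)²))·sqrt(E(A_T²)) + 2·sqrt(E((N_T − N_0)²))·sqrt(E(A_T²)) is a finite constant independent of n. -/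
open MeasureTheory Finset

section AuxLemmas

variable {Ω : Type*} {m0 : MeasurableSpace Ω} {P : Measure Ω}

/-- Product of two L² functions is integrable. -/
lemma aux_integrable_mul {f g : Ω → ℝ} (hf : MemLp f 2 P) (hg : MemLp g 2 P) :
    Integrable (fun ω => f ω * g ω) P := by
  have h1 : Integrable (fun ω => (f ω ^ 2 + g ω ^ 2) / 2) P :=
    (hf.integrable_sq.add hg.integrable_sq).div_const 2
  refine h1.mono' (hf.1.mul hg.1) ?_
  filter_upwards with ω
  rw [Real.norm_eq_abs, abs_mul]
  nlinarith [abs_nonneg (f ω), abs_nonneg (g ω), sq_abs (f ω), sq_abs (g ω),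
    sq_nonneg (|f ω| - |g ω|)]

/-- Cauchy–Schwarz inequality for integrals of L² functions. -/
lemma aux_cs {f g : Ω → ℝ} (hf : MemLp f 2 P) (hg : MemLp g 2 P) :
    ∫ ω, f ω * g ω ∂P ≤ Real.sqrt (∫ ω, f ω ^ 2 ∂P) * Real.sqrt (∫ ω, g ω ^ 2 ∂P) := by
  have key : ∀ (u v : Ω → ℝ) (hu : MemLp u 2 P) (hv : MemLp v 2 P),
      (inner ℝ (hu.toLp u) (hv.toLp v) : ℝ) = ∫ ω, u ω * v ω ∂P := by
    intro u v hu hv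
    rw [L2.inner_def]
    refine integral_congr_ae ?_
    filter_upwards [hu.coeFn_toLp, hv.coeFn_toLp] with ω h1 h2
    simp [h1, h2, RCLike.inner_apply, mul_comm]
  simp only [pow_two]
  rw [← key f g hf hg, ← key f f hf hf, ← key g g hg hg,
    real_inner_self_eq_norm_mul_norm, real_inner_self_eq_norm_mul_norm,
    Real.sqrt_mul_self (norm_nonneg _), Real.sqrt_mul_self (norm_nonneg _)]
  exact real_inner_le_norm _ _

lemma aux_sqrt_add {a b : ℝ} (ha : 0 ≤ a) (hb : 0 ≤ b) :
    Real.sqrt (a + b) ≤ Real.sqrt a + Real.sqrt b := by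
  have h : a + b ≤ (Real.sqrt a + Real.sqrt b) ^ 2 := by
    nlinarith [Real.sq_sqrt ha, Real.sq_sqrt hb, Real.sqrt_nonneg a, Real.sqrt_nonneg b,
      mul_nonneg (Real.sqrt_nonneg a) (Real.sqrt_nonneg b)]
  calc Real.sqrt (a + b) ≤ Real.sqrt ((Real.sqrt a + Real.sqrt b) ^ 2) := Real.sqrt_le_sqrt h
    _ = Real.sqrt a + Real.sqrt b := Real.sqrt_sq (by positivity)

/-- A martingale increment is orthogonal to any square-integrable r.v. measurable at the
earlier time. -/
lemma aux_orth [IsProbabilityMeasure P] {ℱ : Filtration ℝ m0} {M : ℝ → Ω → ℝ}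
    (hM : Martingale M ℱ P) {s t : ℝ} (hst : s ≤ t)
    {g : Ω → ℝ} (hgm : StronglyMeasurable[ℱ s] g) (hg2 : MemLp g 2 P)
    (hMs : MemLp (M s) 2 P) (hMt : MemLp (M t) 2 P) :
    ∫ ω, g ω * (M t ω - M s ω) ∂P = 0 := by
  have hMsi : Integrable (M s) P := hMs.integrable one_le_two
  have hMti : Integrable (M t) P := hMt.integrable one_le_two
  have hprod : Integrable (g * (M t - M s)) P := aux_integrable_mul hg2 (hMt.sub hMs)
  have hD : Integrable (M t - M s) P := hMti.sub hMsi
  have hce : P[g * (M t - M s)|ℱ s] =ᵐ[P] fun _ => (0 : ℝ) := by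
    refine (condExp_mul_of_stronglyMeasurable_left hgm hprod hD).trans ?_
    have h3 : P[M s|ℱ s] = M s :=
      condExp_of_stronglyMeasurable (ℱ.le s) (hM.stronglyAdapted s) hMsi
    have h1 : P[M t - M s|ℱ s] =ᵐ[P] fun _ => (0 : ℝ) := by
      refine (condExp_sub hMti hMsi _).trans ?_
      filter_upwards [hM.condExp_ae_eq hst] with ω hω
      simp [Pi.sub_apply, hω, h3]
    filter_upwards [h1] with ω hω
    simp only [Pi.mul_apply] at hω ⊢
    rw [hω, mul_zero]
  calc ∫ ω, g ω * (M t ω - M s ω) ∂P = ∫ ω, (g * (M t - M s)) ω ∂P := rfl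
    _ = ∫ ω, (P[g * (M t - M s)|ℱ s]) ω ∂P := (integral_condExp (ℱ.le s)).symm
    _ = 0 := by rw [integral_congr_ae hce, integral_const]; simp

end AuxLemmas

/-- Abstract form of Theorem 3 of the paper: if `X = x₀ + M + N - A` with `M, N` orthogonal
square-integrable martingales, `A` adapted with `A_0 = 0`, a.s. nonnegative nondecreasing paths
and `A_T ∈ L²`, then for every `n ≥ 1` (regular partition `t_i = iT/n`) the discrete variance
swap value `E(∑ (δ_i X)²)` differs from `E((M_T - M_0)²) + E((N_T - N_0)²)` by at most the
constant `C = E(A_T²) + 2·sqrt(E((M_T-M_0)²))·sqrt(E(A_T²)) + 2·sqrt(E((N_T-N_0)²))·sqrt(E(A_T²))`,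
independent of `n`. -/
theorem stmt_6 {Ω : Type*} {m0 : MeasurableSpace Ω} (P : Measure Ω) [IsProbabilityMeasure P]
    (T : ℝ) (hT : 0 < T) (ℱ : Filtration ℝ m0) (x₀ : ℝ)
    (M N : ℝ → Ω → ℝ) (hM : Martingale M ℱ P) (hN : Martingale N ℱ P)
    (hM2 : ∀ t ∈ Set.Icc (0 : ℝ) T, MemLp (M t) 2 P)
    (hN2 : ∀ t ∈ Set.Icc (0 : ℝ) T, MemLp (N t) 2 P)
    (horth : ∀ s t : ℝ, 0 ≤ s → s ≤ t → t ≤ T →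
      ∫ ω, (M t ω - M s ω) * (N t ω - N s ω) ∂P = 0)
    (A : ℝ → Ω → ℝ) (hAadapted : Adapted ℱ A)
    (hA0 : ∀ᵐ ω ∂P, A 0 ω = 0)
    (hAmono : ∀ᵐ ω ∂P, ∀ s t : ℝ, 0 ≤ s → s ≤ t → t ≤ T → A s ω ≤ A t ω)
    (hAnonneg : ∀ᵐ ω ∂P, ∀ t ∈ Set.Icc (0 : ℝ) T, 0 ≤ A t ω)
    (hAT : MemLp (A T) 2 P)
    (X : ℝ → Ω → ℝ) (hX : ∀ t ω, X t ω = x₀ + M t ω + N t ω - A t ω) :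
    ∀ n : ℕ, 1 ≤ n →
      |(∫ ω, ∑ i ∈ Finset.range n,
          (X (((i : ℝ) + 1) * T / n) ω - X ((i : ℝ) * T / n) ω) ^ 2 ∂P) -
        ((∫ ω, (M T ω - M 0 ω) ^ 2 ∂P) + ∫ ω, (N T ω - N 0 ω) ^ 2 ∂P)|
      ≤ (∫ ω, (A T ω) ^ 2 ∂P)
        + 2 * Real.sqrt (∫ ω, (M T ω - M 0 ω) ^ 2 ∂P) * Real.sqrt (∫ ω, (A T ω) ^ 2 ∂P)
        + 2 * Real.sqrt (∫ ω, (N T ω - N 0 ω) ^ 2 ∂P) * Real.sqrt (∫ ω, (A T ω) ^ 2 ∂P) := by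
  intro n hn
  have hn0 : (0 : ℝ) < n := by exact_mod_cast Nat.lt_of_lt_of_le Nat.zero_lt_one hn
  set u : ℕ → ℝ := fun i => i * T / n with hudef
  have hu0 : u 0 = 0 := by simp [hudef]
  have hun : u n = T := by simp only [hudef]; field_simp
  have humono : ∀ {i j : ℕ}, i ≤ j → u i ≤ u j := by
    intro i j hij
    have hc : (i : ℝ) ≤ j := by exact_mod_cast hij
    have h : (i : ℝ) * T ≤ j * T := mul_le_mul_of_nonneg_right hc hT.le
    exact div_le_div_of_nonneg_right h hn0.le
  have humem : ∀ i ≤ n, u i ∈ Set.Icc (0 : ℝ) T := fun i hi =>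
    ⟨hu0 ▸ humono (Nat.zero_le i), hun ▸ humono hi⟩
  -- increments
  set DM : ℕ → Ω → ℝ := fun i ω => M (u (i + 1)) ω - M (u i) ω with hDMdef
  set DN : ℕ → Ω → ℝ := fun i ω => N (u (i + 1)) ω - N (u i) ω with hDNdef
  set DA : ℕ → Ω → ℝ := fun i ω => A (u (i + 1)) ω - A (u i) ω with hDAdef
  set D : ℕ → Ω → ℝ := fun i ω => DM i ω + DN i ω with hDdef
  -- L² facts
  have hMu : ∀ i ≤ n, MemLp (M (u i)) 2 P := fun i hi => hM2 _ (humem i hi)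
  have hNu : ∀ i ≤ n, MemLp (N (u i)) 2 P := fun i hi => hN2 _ (humem i hi)
  have hAu : ∀ i ≤ n, MemLp (A (u i)) 2 P := by
    intro i hi
    refine MemLp.of_le hAT ((hAadapted (u i)).mono (ℱ.le _) le_rfl).aestronglyMeasurable ?_
    filter_upwards [hAmono, hAnonneg] with ω h1 h2
    have hTmem : T ∈ Set.Icc (0 : ℝ) T := ⟨hT.le, le_rfl⟩
    have hui := humem i hi
    rw [Real.norm_eq_abs, Real.norm_eq_abs, abs_of_nonneg (h2 _ hui),
      abs_of_nonneg (h2 _ hTmem)]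
    exact h1 (u i) T hui.1 hui.2 le_rfl
  have hDM2 : ∀ i < n, MemLp (DM i) 2 P := fun i hi =>
    (hMu (i + 1) hi).sub (hMu i hi.le)
  have hDN2 : ∀ i < n, MemLp (DN i) 2 P := fun i hi =>
    (hNu (i + 1) hi).sub (hNu i hi.le)
  have hDA2 : ∀ i < n, MemLp (DA i) 2 P := fun i hi =>
    (hAu (i + 1) hi).sub (hAu i hi.le)
  have hD2 : ∀ i < n, MemLp (D i) 2 P := fun i hi =>
    (hDM2 i hi).add (hDN2 i hi)
  -- measurability of increments at the right time
  have hDMm : ∀ i, StronglyMeasurable[ℱ (u (i + 1))] (DM i) := fun i =>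
    (hM.stronglyAdapted (u (i + 1))).sub ((hM.stronglyAdapted (u i)).mono (ℱ.mono (humono (Nat.le_succ i))))
  have hDNm : ∀ i, StronglyMeasurable[ℱ (u (i + 1))] (DN i) := fun i =>
    (hN.stronglyAdapted (u (i + 1))).sub ((hN.stronglyAdapted (u i)).mono (ℱ.mono (humono (Nat.le_succ i))))
  -- orthogonality of distinct increments of the same martingale
  have hMM : ∀ i j, i ∈ range n → j ∈ range n → i ≠ j →
      ∫ ω, DM i ω * DM j ω ∂P = 0 := by
    have key : ∀ i j, i < j → j < n → ∫ ω, DM i ω * DM j ω ∂P = 0 := by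
      intro i j hij hj
      exact aux_orth hM (humono (Nat.le_succ j))
        ((hDMm i).mono (ℱ.mono (humono hij)))
        (hDM2 i (lt_trans hij hj)) (hMu j hj.le) (hMu (j + 1) hj)
    intro i j hi hj hne
    rw [mem_range] at hi hj
    rcases hne.lt_or_gt with h | h
    · exact key i j h hj
    · have := key j i h hi
      rw [← this]
      exact integral_congr_ae (Filter.Eventually.of_forall fun ω => mul_comm _ _)
  have hNN : ∀ i j, i ∈ range n → j ∈ range n → i ≠ j →
      ∫ ω, DN i ω * DN j ω ∂P = 0 := by
    have key : ∀ i j, i < j → j < n → ∫ ω, DN i ω * DN j ω ∂P = 0 := by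
      intro i j hij hj
      exact aux_orth hN (humono (Nat.le_succ j))
        ((hDNm i).mono (ℱ.mono (humono hij)))
        (hDN2 i (lt_trans hij hj)) (hNu j hj.le) (hNu (j + 1) hj)
    intro i j hi hj hne
    rw [mem_range] at hi hj
    rcases hne.lt_or_gt with h | h
    · exact key i j h hj
    · have := key j i h hi
      rw [← this]
      exact integral_congr_ae (Filter.Eventually.of_forall fun ω => mul_comm _ _)
  -- same-interval cross term vanishes
  have hMN : ∀ i < n, ∫ ω, DM i ω * DN i ω ∂P = 0 := by
    intro i hi
    have hui := humem i hi.le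
    have hui1 := humem (i + 1) hi
    exact horth (u i) (u (i + 1)) hui.1 (humono (Nat.le_succ i)) hui1.2
  -- sums of squared increments
  have hEM : ∫ ω, (M T ω - M 0 ω) ^ 2 ∂P = ∑ i ∈ range n, ∫ ω, DM i ω ^ 2 ∂P := by
    have htel : ∀ ω, M T ω - M 0 ω = ∑ i ∈ range n, DM i ω := by
      intro ω
      calc M T ω - M 0 ω = M (u n) ω - M (u 0) ω := by rw [hun, hu0]
        _ = ∑ i ∈ range n, (M (u (i + 1)) ω - M (u i) ω) :=
          (Finset.sum_range_sub (fun i => M (u i) ω) n).symm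
        _ = ∑ i ∈ range n, DM i ω := rfl
    calc ∫ ω, (M T ω - M 0 ω) ^ 2 ∂P
        = ∫ ω, ∑ i ∈ range n, ∑ j ∈ range n, DM i ω * DM j ω ∂P := by
          refine integral_congr_ae (Filter.Eventually.of_forall fun ω => ?_)
          show (M T ω - M 0 ω) ^ 2 = ∑ i ∈ range n, ∑ j ∈ range n, DM i ω * DM j ω
          rw [htel ω, pow_two, Finset.sum_mul_sum]
      _ = ∑ i ∈ range n, ∑ j ∈ range n, ∫ ω, DM i ω * DM j ω ∂P := by
          rw [integral_finset_sum _ fun i hi =>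
            integrable_finset_sum _ fun j hj =>
              aux_integrable_mul (hDM2 i (mem_range.mp hi)) (hDM2 j (mem_range.mp hj))]
          exact Finset.sum_congr rfl fun i hi => integral_finset_sum _ fun j hj =>
            aux_integrable_mul (hDM2 i (mem_range.mp hi)) (hDM2 j (mem_range.mp hj))
      _ = ∑ i ∈ range n, ∫ ω, DM i ω ^ 2 ∂P := by
          refine Finset.sum_congr rfl fun i hi => ?_
          rw [Finset.sum_eq_single_of_mem i hi fun j hj hne => hMM i j hi hj (Ne.symm hne)]
          simp_rw [← pow_two]
  have hEN : ∫ ω, (N T ω - N 0 ω) ^ 2 ∂P = ∑ i ∈ range n, ∫ ω, DN i ω ^ 2 ∂P := by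
    have htel : ∀ ω, N T ω - N 0 ω = ∑ i ∈ range n, DN i ω := by
      intro ω
      calc N T ω - N 0 ω = N (u n) ω - N (u 0) ω := by rw [hun, hu0]
        _ = ∑ i ∈ range n, (N (u (i + 1)) ω - N (u i) ω) :=
          (Finset.sum_range_sub (fun i => N (u i) ω) n).symm
        _ = ∑ i ∈ range n, DN i ω := rfl
    calc ∫ ω, (N T ω - N 0 ω) ^ 2 ∂P
        = ∫ ω, ∑ i ∈ range n, ∑ j ∈ range n, DN i ω * DN j ω ∂P := by
          refine integral_congr_ae (Filter.Eventually.of_forall fun ω => ?_)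
          show (N T ω - N 0 ω) ^ 2 = ∑ i ∈ range n, ∑ j ∈ range n, DN i ω * DN j ω
          rw [htel ω, pow_two, Finset.sum_mul_sum]
      _ = ∑ i ∈ range n, ∑ j ∈ range n, ∫ ω, DN i ω * DN j ω ∂P := by
          rw [integral_finset_sum _ fun i hi =>
            integrable_finset_sum _ fun j hj =>
              aux_integrable_mul (hDN2 i (mem_range.mp hi)) (hDN2 j (mem_range.mp hj))]
          exact Finset.sum_congr rfl fun i hi => integral_finset_sum _ fun j hj =>
            aux_integrable_mul (hDN2 i (mem_range.mp hi)) (hDN2 j (mem_range.mp hj))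
      _ = ∑ i ∈ range n, ∫ ω, DN i ω ^ 2 ∂P := by
          refine Finset.sum_congr rfl fun i hi => ?_
          rw [Finset.sum_eq_single_of_mem i hi fun j hj hne => hNN i j hi hj (Ne.symm hne)]
          simp_rw [← pow_two]
  -- S1 = EM + EN
  have hS1 : ∫ ω, ∑ i ∈ range n, D i ω ^ 2 ∂P
      = (∫ ω, (M T ω - M 0 ω) ^ 2 ∂P) + ∫ ω, (N T ω - N 0 ω) ^ 2 ∂P := by
    rw [integral_finset_sum _ fun i hi => (hD2 i (mem_range.mp hi)).integrable_sq, hEM, hEN,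
      ← Finset.sum_add_distrib]
    refine Finset.sum_congr rfl fun i hi => ?_
    have hi' := mem_range.mp hi
    have hexp : ∀ ω, D i ω ^ 2 = DM i ω ^ 2 + 2 * (DM i ω * DN i ω) + DN i ω ^ 2 := by
      intro ω; simp only [hDdef]; ring
    calc ∫ ω, D i ω ^ 2 ∂P
        = ∫ ω, (DM i ω ^ 2 + 2 * (DM i ω * DN i ω) + DN i ω ^ 2) ∂P :=
          integral_congr_ae (Filter.Eventually.of_forall fun ω => hexp ω)
      _ = (∫ ω, (DM i ω ^ 2 + 2 * (DM i ω * DN i ω)) ∂P) + ∫ ω, DN i ω ^ 2 ∂P :=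
          integral_add ((hDM2 i hi').integrable_sq.add
            ((aux_integrable_mul (hDM2 i hi') (hDN2 i hi')).const_mul 2))
            (hDN2 i hi').integrable_sq
      _ = (∫ ω, DM i ω ^ 2 ∂P) + 2 * (∫ ω, DM i ω * DN i ω ∂P) + ∫ ω, DN i ω ^ 2 ∂P := by
          rw [integral_add (hDM2 i hi').integrable_sq
            ((aux_integrable_mul (hDM2 i hi') (hDN2 i hi')).const_mul 2),
            integral_const_mul 2 _]
      _ = (∫ ω, DM i ω ^ 2 ∂P) + ∫ ω, DN i ω ^ 2 ∂P := by rw [hMN i hi']; ring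
  -- a.e. facts about the A increments
  have hAae : ∀ᵐ ω ∂P, (∀ i ∈ range n, 0 ≤ DA i ω) ∧
      (∑ i ∈ range n, DA i ω = A T ω) ∧ 0 ≤ A T ω := by
    filter_upwards [hAmono, hAnonneg, hA0] with ω h1 h2 h0
    refine ⟨fun i hi => ?_, ?_, h2 T ⟨hT.le, le_rfl⟩⟩
    · have hi' := mem_range.mp hi
      have hui := humem i hi'.le
      have hui1 := humem (i + 1) hi'
      have := h1 (u i) (u (i + 1)) hui.1 (humono (Nat.le_succ i)) hui1.2
      simp only [hDAdef]; linarith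
    · calc ∑ i ∈ range n, DA i ω = A (u n) ω - A (u 0) ω :=
            Finset.sum_range_sub (fun i => A (u i) ω) n
        _ = A T ω := by rw [hun, hu0, h0, sub_zero]
  have hDAsq_le : ∀ᵐ ω ∂P, ∑ i ∈ range n, DA i ω ^ 2 ≤ A T ω ^ 2 := by
    filter_upwards [hAae] with ω hω
    obtain ⟨hnn, hsum, _⟩ := hω
    calc ∑ i ∈ range n, DA i ω ^ 2 ≤ (∑ i ∈ range n, DA i ω) ^ 2 :=
          Finset.sum_sq_le_sq_sum_of_nonneg hnn
      _ = A T ω ^ 2 := by rw [hsum]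
  -- bound on S3
  have hS3nn : 0 ≤ ∫ ω, ∑ i ∈ range n, DA i ω ^ 2 ∂P :=
    integral_nonneg fun ω => Finset.sum_nonneg fun i _ => sq_nonneg _
  have hS3le : ∫ ω, ∑ i ∈ range n, DA i ω ^ 2 ∂P ≤ ∫ ω, A T ω ^ 2 ∂P :=
    integral_mono_ae
      (integrable_finset_sum _ fun i hi => (hDA2 i (mem_range.mp hi)).integrable_sq)
      hAT.integrable_sq hDAsq_le
  -- the function G = sqrt of the sum of squared D increments
  set G : Ω → ℝ := fun ω => Real.sqrt (∑ i ∈ range n, D i ω ^ 2) with hGdef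
  have hGsq : ∀ ω, G ω ^ 2 = ∑ i ∈ range n, D i ω ^ 2 := fun ω =>
    Real.sq_sqrt (Finset.sum_nonneg fun i _ => sq_nonneg _)
  have hG2 : MemLp G 2 P := by
    have hGm : StronglyMeasurable G := by
      refine Real.continuous_sqrt.comp_stronglyMeasurable ?_
      refine Finset.stronglyMeasurable_fun_sum _ fun i _ => ?_
      have hMm : StronglyMeasurable (DM i) := (hDMm i).mono (ℱ.le _)
      have hNm : StronglyMeasurable (DN i) := (hDNm i).mono (ℱ.le _)
      exact (hMm.add hNm).pow 2
    rw [memLp_two_iff_integrable_sq hGm.aestronglyMeasurable]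
    refine (integrable_finset_sum _ fun i hi =>
      (hD2 i (mem_range.mp hi)).integrable_sq).congr ?_
    filter_upwards with ω
    exact (hGsq ω).symm
  have hGint : ∫ ω, G ω ^ 2 ∂P
      = (∫ ω, (M T ω - M 0 ω) ^ 2 ∂P) + ∫ ω, (N T ω - N 0 ω) ^ 2 ∂P := by
    rw [← hS1]
    exact integral_congr_ae (Filter.Eventually.of_forall fun ω => hGsq ω)
  -- pointwise bound for the cross sum
  have hcross_ae : ∀ᵐ ω ∂P, |∑ i ∈ range n, D i ω * DA i ω| ≤ G ω * A T ω := by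
    filter_upwards [hAae] with ω hω
    obtain ⟨hnn, hsum, hATnn⟩ := hω
    have h1 : |∑ i ∈ range n, D i ω * DA i ω| ≤ ∑ i ∈ range n, |D i ω| * |DA i ω| := by
      refine (Finset.abs_sum_le_sum_abs _ _).trans ?_
      exact le_of_eq (Finset.sum_congr rfl fun i _ => abs_mul _ _)
    have h2 : ∑ i ∈ range n, |D i ω| * |DA i ω|
        ≤ Real.sqrt (∑ i ∈ range n, |D i ω| ^ 2) * Real.sqrt (∑ i ∈ range n, |DA i ω| ^ 2) :=
      Real.sum_mul_le_sqrt_mul_sqrt _ _ _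
    have h3 : Real.sqrt (∑ i ∈ range n, |D i ω| ^ 2) = G ω := by
      simp only [sq_abs, hGdef]
    have h4 : Real.sqrt (∑ i ∈ range n, |DA i ω| ^ 2) ≤ A T ω := by
      have hb : ∑ i ∈ range n, |DA i ω| ^ 2 ≤ A T ω ^ 2 := by
        simp only [sq_abs]
        calc ∑ i ∈ range n, DA i ω ^ 2 ≤ (∑ i ∈ range n, DA i ω) ^ 2 :=
              Finset.sum_sq_le_sq_sum_of_nonneg hnn
          _ = A T ω ^ 2 := by rw [hsum]
      calc Real.sqrt (∑ i ∈ range n, |DA i ω| ^ 2) ≤ Real.sqrt (A T ω ^ 2) :=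
            Real.sqrt_le_sqrt hb
        _ = A T ω := Real.sqrt_sq hATnn
    calc |∑ i ∈ range n, D i ω * DA i ω| ≤ ∑ i ∈ range n, |D i ω| * |DA i ω| := h1
      _ ≤ Real.sqrt (∑ i ∈ range n, |D i ω| ^ 2) * Real.sqrt (∑ i ∈ range n, |DA i ω| ^ 2) := h2
      _ ≤ G ω * A T ω := by
          rw [h3]
          exact mul_le_mul_of_nonneg_left h4 (Real.sqrt_nonneg _)
  -- cross-sum integrability
  have hcross_int : Integrable (fun ω => ∑ i ∈ range n, D i ω * DA i ω) P :=
    integrable_finset_sum _ fun i hi =>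
      aux_integrable_mul (hD2 i (mem_range.mp hi)) (hDA2 i (mem_range.mp hi))
  have hGA_int : Integrable (fun ω => G ω * A T ω) P := aux_integrable_mul hG2 hAT
  -- bound on S2
  have hS2 : |∫ ω, ∑ i ∈ range n, D i ω * DA i ω ∂P|
      ≤ (Real.sqrt (∫ ω, (M T ω - M 0 ω) ^ 2 ∂P) + Real.sqrt (∫ ω, (N T ω - N 0 ω) ^ 2 ∂P))
        * Real.sqrt (∫ ω, A T ω ^ 2 ∂P) := by
    have hEMnn : 0 ≤ ∫ ω, (M T ω - M 0 ω) ^ 2 ∂P := integral_nonneg fun ω => sq_nonneg _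
    have hENnn : 0 ≤ ∫ ω, (N T ω - N 0 ω) ^ 2 ∂P := integral_nonneg fun ω => sq_nonneg _
    calc |∫ ω, ∑ i ∈ range n, D i ω * DA i ω ∂P|
        ≤ ∫ ω, |∑ i ∈ range n, D i ω * DA i ω| ∂P := by
          simpa [Real.norm_eq_abs] using norm_integral_le_integral_norm
            (μ := P) (fun ω => ∑ i ∈ range n, D i ω * DA i ω)
      _ ≤ ∫ ω, G ω * A T ω ∂P :=
          integral_mono_ae hcross_int.abs hGA_int hcross_ae
      _ ≤ Real.sqrt (∫ ω, G ω ^ 2 ∂P) * Real.sqrt (∫ ω, A T ω ^ 2 ∂P) := aux_cs hG2 hAT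
      _ ≤ (Real.sqrt (∫ ω, (M T ω - M 0 ω) ^ 2 ∂P) + Real.sqrt (∫ ω, (N T ω - N 0 ω) ^ 2 ∂P))
            * Real.sqrt (∫ ω, A T ω ^ 2 ∂P) := by
          refine mul_le_mul_of_nonneg_right ?_ (Real.sqrt_nonneg _)
          rw [hGint]
          exact aux_sqrt_add hEMnn hENnn
  -- decomposition of the main integral
  have hptwise : ∀ ω, ∑ i ∈ range n,
      (X (((i : ℝ) + 1) * T / n) ω - X ((i : ℝ) * T / n) ω) ^ 2
      = (∑ i ∈ range n, D i ω ^ 2) - 2 * (∑ i ∈ range n, D i ω * DA i ω)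
        + ∑ i ∈ range n, DA i ω ^ 2 := by
    intro ω
    have hterm : ∀ i : ℕ, X (((i : ℝ) + 1) * T / n) ω - X ((i : ℝ) * T / n) ω
        = D i ω - DA i ω := by
      intro i
      have hcast : ((i : ℝ) + 1) * T / n = u (i + 1) := by
        simp only [hudef]; push_cast; ring
      have hcast2 : (i : ℝ) * T / n = u i := rfl
      rw [hcast, hcast2, hX, hX]
      simp only [hDdef, hDMdef, hDNdef, hDAdef]
      ring
    calc ∑ i ∈ range n, (X (((i : ℝ) + 1) * T / n) ω - X ((i : ℝ) * T / n) ω) ^ 2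
        = ∑ i ∈ range n, (D i ω ^ 2 - 2 * (D i ω * DA i ω) + DA i ω ^ 2) := by
          refine Finset.sum_congr rfl fun i _ => ?_
          rw [hterm i]; ring
      _ = (∑ i ∈ range n, D i ω ^ 2) - 2 * (∑ i ∈ range n, D i ω * DA i ω)
            + ∑ i ∈ range n, DA i ω ^ 2 := by
          rw [Finset.sum_add_distrib, Finset.sum_sub_distrib, ← Finset.mul_sum]
  have hI1 : Integrable (fun ω => ∑ i ∈ range n, D i ω ^ 2) P :=
    integrable_finset_sum _ fun i hi => (hD2 i (mem_range.mp hi)).integrable_sq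
  have hI3 : Integrable (fun ω => ∑ i ∈ range n, DA i ω ^ 2) P :=
    integrable_finset_sum _ fun i hi => (hDA2 i (mem_range.mp hi)).integrable_sq
  have hmain : ∫ ω, ∑ i ∈ range n,
      (X (((i : ℝ) + 1) * T / n) ω - X ((i : ℝ) * T / n) ω) ^ 2 ∂P
      = (∫ ω, ∑ i ∈ range n, D i ω ^ 2 ∂P)
        - 2 * (∫ ω, ∑ i ∈ range n, D i ω * DA i ω ∂P)
        + ∫ ω, ∑ i ∈ range n, DA i ω ^ 2 ∂P := by
    calc ∫ ω, ∑ i ∈ range n,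
        (X (((i : ℝ) + 1) * T / n) ω - X ((i : ℝ) * T / n) ω) ^ 2 ∂P
        = ∫ ω, ((∑ i ∈ range n, D i ω ^ 2) - 2 * (∑ i ∈ range n, D i ω * DA i ω)
            + ∑ i ∈ range n, DA i ω ^ 2) ∂P :=
          integral_congr_ae (Filter.Eventually.of_forall fun ω => hptwise ω)
      _ = (∫ ω, ((∑ i ∈ range n, D i ω ^ 2) - 2 * (∑ i ∈ range n, D i ω * DA i ω)) ∂P)
            + ∫ ω, ∑ i ∈ range n, DA i ω ^ 2 ∂P :=
          integral_add (hI1.sub (hcross_int.const_mul 2)) hI3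
      _ = (∫ ω, ∑ i ∈ range n, D i ω ^ 2 ∂P)
            - 2 * (∫ ω, ∑ i ∈ range n, D i ω * DA i ω ∂P)
            + ∫ ω, ∑ i ∈ range n, DA i ω ^ 2 ∂P := by
          rw [integral_sub hI1 (hcross_int.const_mul 2), integral_const_mul 2 _]
  -- final assembly
  rw [hmain, hS1]
  set S2 := ∫ ω, ∑ i ∈ range n, D i ω * DA i ω ∂P with hS2def
  set S3 := ∫ ω, ∑ i ∈ range n, DA i ω ^ 2 ∂P with hS3def
  set EM := ∫ ω, (M T ω - M 0 ω) ^ 2 ∂P with hEMdef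
  set EN := ∫ ω, (N T ω - N 0 ω) ^ 2 ∂P with hENdef
  set EA := ∫ ω, (A T ω) ^ 2 ∂P with hEAdef
  have habs : EM + EN - 2 * S2 + S3 - (EM + EN) = S3 - 2 * S2 := by ring
  rw [habs]
  have h2 : |S2| ≤ (Real.sqrt EM + Real.sqrt EN) * Real.sqrt EA := hS2
  have hEAnn : (0 : ℝ) ≤ EA := integral_nonneg fun ω => sq_nonneg _
  have h5 := le_abs_self S2
  have h6 := neg_abs_le S2
  rw [abs_le]
  constructor <;> nlinarith [Real.sqrt_nonneg EA, Real.sqrt_nonneg EM, Real.sqrt_nonneg EN]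
end
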